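/- Let n ≥ 2 and let T_1, …, T_n be independent and identically distributed exponential random variables with rate ε > 0. Let M₁ be the largest of the values T_1, …, T_n and let M₂ be the second-largest value, i.e., the maximum of the multiset {T_1, …, T_n} after removing one occurrence of M₁. Then P[M₁ ≤ M₂ + 1] = 1 − e^{−ε}. -/

import Mathlib

open MeasureTheory ProbabilityTheory
open scoped ENNReal

open Filter in
lemma aux_no_atom {Ω : Type} [MeasurableSpace Ω] (μ : Measure Ω) [IsProbabilityMeasure μ]
    (eps : ℝ) (Y : Ω → ℝ) (hY : Measurable Y)
    (hYexp : ∀ t : ℝ, 0 ≤ t → μ {ω | t < Y ω} = ENNReal.ofReal (Real.exp (-(eps * t))))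
    (x : ℝ) : μ {ω | Y ω = x} = 0 := by
  have h0 : μ {ω | (0:ℝ) < Y ω} = 1 := by simpa using hYexp 0 le_rfl
  rcases le_or_gt x 0 with hx | hx
  · have hsub : {ω | Y ω = x} ⊆ {ω | (0:ℝ) < Y ω}ᶜ := by
      intro ω h
      simp only [Set.mem_compl_iff, Set.mem_setOf_eq, not_lt] at *
      rw [h]; exact hx
    refine le_antisymm (le_trans (measure_mono hsub) ?_) zero_le
    rw [measure_compl (measurableSet_lt measurable_const hY) (measure_ne_top _ _), h0,
      measure_univ, tsub_self]
  · have bound : ∀ δ : ℝ, 0 < δ → δ < x →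
        μ {ω | Y ω = x} ≤ ENNReal.ofReal (Real.exp (-(eps * (x - δ))) - Real.exp (-(eps * x))) := by
      intro δ hδ0 hδx
      have hsub : {ω | Y ω = x} ⊆ {ω | x - δ < Y ω} \ {ω | x < Y ω} := by
        intro ω h
        simp only [Set.mem_setOf_eq] at h
        refine ⟨?_, ?_⟩
        · show x - δ < Y ω
          rw [h]; linarith
        · show ¬ x < Y ω
          rw [h]; exact lt_irrefl x
      refine le_trans (measure_mono hsub) ?_
      rw [measure_diff (by intro ω h; simp only [Set.mem_setOf_eq] at *; linarith)
        ((measurableSet_lt measurable_const hY).nullMeasurableSet) (measure_ne_top _ _)]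
      rw [hYexp (x - δ) (by linarith), hYexp x (by linarith),
        ← ENNReal.ofReal_sub _ (Real.exp_nonneg _)]
    set F : ℝ → ENNReal := fun δ => ENNReal.ofReal (Real.exp (-(eps * (x - δ))) - Real.exp (-(eps * x)))
    have hδseq : Tendsto (fun k : ℕ => x / ((k : ℝ) + 2)) atTop (nhds 0) :=
      Tendsto.div_atTop tendsto_const_nhds
        (tendsto_atTop_add_const_right _ 2 tendsto_natCast_atTop_atTop)
    have hFcont : Tendsto F (nhds 0) (nhds 0) := by
      have hc : Continuous F := by
        apply ENNReal.continuous_ofReal.comp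
        continuity
      have h00 : F 0 = 0 := by simp [F]
      simpa [h00] using hc.tendsto 0
    have hlim : Tendsto (fun k : ℕ => F (x / ((k : ℝ) + 2))) atTop (nhds 0) :=
      hFcont.comp hδseq
    refine le_antisymm (ge_of_tendsto hlim (Filter.Eventually.of_forall fun k => ?_)) zero_le
    have hpos : 0 < x / ((k : ℝ) + 2) := by positivity
    have hlt : x / ((k : ℝ) + 2) < x := by
      apply div_lt_self hx
      have : (0:ℝ) ≤ (k:ℝ) := Nat.cast_nonneg k
      linarith
    exact bound _ hpos hlt

lemma aux_tail_indep {Ω : Type} [MeasurableSpace Ω] (μ : Measure Ω) [IsProbabilityMeasure μ]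
    (eps : ℝ) (X Y : Ω → ℝ) (hX : Measurable X) (hY : Measurable Y)
    (hind : IndepFun X Y μ)
    (hXpos : ∀ᵐ ω ∂μ, 0 ≤ X ω)
    (hYexp : ∀ t : ℝ, 0 ≤ t → μ {ω | t < Y ω} = ENNReal.ofReal (Real.exp (-(eps * t))))
    (t : ℝ) (ht : 0 ≤ t) :
    μ {ω | X ω + t < Y ω} = ENNReal.ofReal (Real.exp (-(eps * t))) * μ {ω | X ω < Y ω} := by
  have hmap : μ.map (fun ω => (X ω, Y ω)) = (μ.map X).prod (μ.map Y) :=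
    (indepFun_iff_map_prod_eq_prod_map_map hX.aemeasurable hY.aemeasurable).mp hind
  have key : ∀ s : ℝ, 0 ≤ s →
      μ {ω | X ω + s < Y ω}
        = ENNReal.ofReal (Real.exp (-(eps * s)))
          * ∫⁻ x, ENNReal.ofReal (Real.exp (-(eps * x))) ∂(μ.map X) := by
    intro s hs
    have hset : MeasurableSet {p : ℝ × ℝ | p.1 + s < p.2} :=
      measurableSet_lt (measurable_fst.add_const s) measurable_snd
    have h1 : μ {ω | X ω + s < Y ω} = μ.map (fun ω => (X ω, Y ω)) {p : ℝ × ℝ | p.1 + s < p.2} := by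
      rw [Measure.map_apply (hX.prodMk hY) hset]
      rfl
    rw [h1, hmap, Measure.prod_apply hset]
    have hae : ∀ᵐ x ∂(μ.map X), 0 ≤ x := by
      refine (ae_map_iff hX.aemeasurable ?_).mpr hXpos
      exact measurableSet_Ici
    have h2 : ∀ᵐ x ∂(μ.map X),
        (μ.map Y) (Prod.mk x ⁻¹' {p : ℝ × ℝ | p.1 + s < p.2})
          = ENNReal.ofReal (Real.exp (-(eps * s))) * ENNReal.ofReal (Real.exp (-(eps * x))) := by
      filter_upwards [hae] with x hx
      have hpre : Prod.mk x ⁻¹' {p : ℝ × ℝ | p.1 + s < p.2} = {y : ℝ | x + s < y} := rfl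
      have hmY : (μ.map Y) {y : ℝ | x + s < y} = μ {ω | x + s < Y ω} := by
        rw [Measure.map_apply hY (by exact measurableSet_lt measurable_const measurable_id)]
        rfl
      rw [hpre, hmY, hYexp (x + s) (by linarith), ← ENNReal.ofReal_mul (Real.exp_nonneg _),
        ← Real.exp_add]
      ring_nf
    have hmble : Measurable fun x : ℝ => ENNReal.ofReal (Real.exp (-(eps * x))) := by fun_prop
    rw [lintegral_congr_ae h2, lintegral_const_mul _ hmble]
  have h0 := key 0 le_rfl
  simp only [add_zero, mul_zero, neg_zero, Real.exp_zero, ENNReal.ofReal_one, one_mul] at h0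
  rw [key t ht, h0]

lemma aux_tie {Ω : Type} [MeasurableSpace Ω] (μ : Measure Ω) [IsProbabilityMeasure μ]
    (X Y : Ω → ℝ) (hX : Measurable X) (hY : Measurable Y) (hind : IndepFun X Y μ)
    (hatom : ∀ x : ℝ, μ {ω | Y ω = x} = 0) :
    μ {ω | X ω = Y ω} = 0 := by
  have hmap : μ.map (fun ω => (X ω, Y ω)) = (μ.map X).prod (μ.map Y) :=
    (indepFun_iff_map_prod_eq_prod_map_map hX.aemeasurable hY.aemeasurable).mp hind
  have hset : MeasurableSet {p : ℝ × ℝ | p.1 = p.2} :=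
    measurableSet_eq_fun measurable_fst measurable_snd
  have h1 : μ {ω | X ω = Y ω} = ((μ.map X).prod (μ.map Y)) {p : ℝ × ℝ | p.1 = p.2} := by
    rw [← hmap, Measure.map_apply (hX.prodMk hY) hset]
    rfl
  rw [h1, Measure.prod_apply hset]
  have h2 : ∀ x : ℝ, (μ.map Y) {x} = 0 := by
    intro x
    rw [Measure.map_apply hY (measurableSet_singleton x)]
    have h3 : Y ⁻¹' {x} = {ω | Y ω = x} := by ext ω; simp
    rw [h3]; exact hatom x
  have h4 : ∀ x : ℝ, (μ.map Y) (Prod.mk x ⁻¹' {p : ℝ × ℝ | p.1 = p.2}) = 0 := by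
    intro x
    have hpre : Prod.mk x ⁻¹' {p : ℝ × ℝ | p.1 = p.2} = {x} := by
      ext y; simp [eq_comm]
    rw [hpre]; exact h2 x
  simp only [h4]
  simp

/-- Let `n ≥ 2` and let `T 1, …, T n` be i.i.d. exponential random
variables with rate `ε > 0`. Let `M₁ = max_i T i` be the largest value and let
`M₂ = min_i max_{j ≠ i} T j` be the second-largest value (the maximum of the multiset
`{T 1, …, T n}` after removing one occurrence of `M₁`). Then
`P[M₁ ≤ M₂ + 1] = 1 - e^{-ε}`. -/
theorem stmt_12 {Ω : Type} [MeasurableSpace Ω] (μ : Measure Ω) [IsProbabilityMeasure μ]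
    (eps : ℝ) (heps : 0 < eps) (n : ℕ) (hn : 2 ≤ n)
    (T : Fin n → Ω → ℝ)
    (hmeas : ∀ i, Measurable (T i))
    (hindep : iIndepFun T μ)
    (hexp : ∀ i, ∀ t : ℝ, 0 ≤ t →
      μ {ω | t < T i ω} = ENNReal.ofReal (Real.exp (-(eps * t)))) :
    μ {ω | (⨆ i : Fin n, T i ω) ≤
        (⨅ i : Fin n, ⨆ j : {j : Fin n // j ≠ i}, T j.1 ω) + 1} =
      ENNReal.ofReal (1 - Real.exp (-eps)) := by
  haveI : NeZero n := ⟨by omega⟩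
  haveI : Nontrivial (Fin n) := Fin.nontrivial_iff_two_le.mpr hn
  haveI hne : ∀ i : Fin n, Nonempty {j : Fin n // j ≠ i} := fun i => by
    obtain ⟨j, hj⟩ := exists_ne i
    exact ⟨⟨j, hj⟩⟩
  set S : Fin n → Ω → ℝ := fun i ω => ⨆ j : {j : Fin n // j ≠ i}, T j.1 ω with hSdef
  have hSmeas : ∀ i, Measurable (S i) := fun i => Measurable.iSup (fun j => hmeas j.1)
  -- basic pointwise facts
  have hTleS : ∀ (ω : Ω) (i j : Fin n), j ≠ i → T j ω ≤ S i ω := by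
    intro ω i j hj
    exact le_ciSup (Set.finite_range fun j : {j : Fin n // j ≠ i} => T j.1 ω).bddAbove
      (⟨j, hj⟩ : {j : Fin n // j ≠ i})
  have hTlesup : ∀ (ω : Ω) (i : Fin n), T i ω ≤ ⨆ k, T k ω := by
    intro ω i
    exact le_ciSup (Set.finite_range fun k => T k ω).bddAbove i
  have hinfleS : ∀ (ω : Ω) (i : Fin n), (⨅ k, S k ω) ≤ S i ω := by
    intro ω i
    exact ciInf_le (Set.finite_range fun k => S k ω).bddBelow i
  -- independence of S i and T i
  have hindSi : ∀ i : Fin n, IndepFun (S i) (T i) μ := by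
    intro i
    have h := hindep.indepFun_finset {i}ᶜ {i} (by simp) hmeas
    have h2 := h.comp
      (φ := fun v : (({i}ᶜ : Finset (Fin n)) : Type) → ℝ =>
        ⨆ j : {j : Fin n // j ≠ i}, v ⟨j.1, by simpa using j.2⟩)
      (ψ := fun v : (({i} : Finset (Fin n)) : Type) → ℝ => v ⟨i, Finset.mem_singleton_self i⟩)
      (Measurable.iSup fun j : {j : Fin n // j ≠ i} => by exact measurable_pi_apply _)
      (measurable_pi_apply (X := fun _ : (({i} : Finset (Fin n)) : Type) => ℝ)
        ⟨i, Finset.mem_singleton_self i⟩)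
    exact h2
  -- a.e. positivity
  have hTpos : ∀ i : Fin n, ∀ᵐ ω ∂μ, 0 < T i ω := by
    intro i
    have h0 : μ {ω | (0:ℝ) < T i ω} = 1 := by simpa using hexp i 0 le_rfl
    rw [ae_iff]
    have : {ω | ¬ 0 < T i ω} = {ω | (0:ℝ) < T i ω}ᶜ := by ext ω; simp
    rw [this, measure_compl (measurableSet_lt measurable_const (hmeas i)) (measure_ne_top _ _),
      h0, measure_univ, tsub_self]
  have hSpos : ∀ i : Fin n, ∀ᵐ ω ∂μ, 0 ≤ S i ω := by
    intro i
    obtain ⟨j, hj⟩ := exists_ne i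
    filter_upwards [hTpos j] with ω hω
    exact le_trans hω.le (hTleS ω i j hj)
  -- events
  set A : Fin n → Set Ω := fun i => {ω | S i ω + 1 < T i ω} with hAdef
  set B : Fin n → Set Ω := fun i => {ω | S i ω < T i ω} with hBdef
  have hAmeas : ∀ i, MeasurableSet (A i) :=
    fun i => measurableSet_lt ((hSmeas i).add_const 1) (hmeas i)
  have hBmeas : ∀ i, MeasurableSet (B i) :=
    fun i => measurableSet_lt (hSmeas i) (hmeas i)
  -- disjointness
  have hdisj : ∀ t : ℝ, 0 ≤ t →
      Pairwise (Function.onFun Disjoint fun i => {ω | S i ω + t < T i ω}) := by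
    intro t ht i j hij
    rw [Function.onFun, Set.disjoint_left]
    intro ω h1 h2
    simp only [Set.mem_setOf_eq] at h1 h2
    have e1 : T j ω ≤ S i ω := hTleS ω i j (Ne.symm hij)
    have e2 : T i ω ≤ S j ω := hTleS ω j i hij
    linarith
  have hdisjA : Pairwise (Function.onFun Disjoint A) := hdisj 1 (by norm_num)
  have hdisjB : Pairwise (Function.onFun Disjoint B) := by simpa using hdisj 0 le_rfl
  -- complement of the target event is ⋃ A i
  have hcompl : {ω | (⨆ i : Fin n, T i ω) ≤
      (⨅ i : Fin n, ⨆ j : {j : Fin n // j ≠ i}, T j.1 ω) + 1}ᶜ = ⋃ i, A i := by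
    ext ω
    simp only [Set.mem_compl_iff, Set.mem_setOf_eq, not_le, Set.mem_iUnion, hAdef]
    constructor
    · intro h
      obtain ⟨i, hi⟩ := Finite.exists_max fun k => T k ω
      have hsup : (⨆ k, T k ω) = T i ω := le_antisymm (ciSup_le hi) (hTlesup ω i)
      have hSi_le : ∀ k, S i ω ≤ S k ω := by
        intro k
        by_cases hk : k = i
        · rw [hk]
        · calc S i ω ≤ T i ω := ciSup_le fun j => hi j.1
            _ ≤ S k ω := hTleS ω k i (Ne.symm hk)
      have hinf : (⨅ k, S k ω) = S i ω :=
        le_antisymm (hinfleS ω i) (le_ciInf hSi_le)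
      refine ⟨i, ?_⟩
      rw [← hsup, ← hinf]
      exact h
    · rintro ⟨i, hi⟩
      calc (⨅ k, S k ω) + 1 ≤ S i ω + 1 := by
            have := hinfleS ω i; linarith
        _ < T i ω := hi
        _ ≤ ⨆ k, T k ω := hTlesup ω i
  -- μ (⋃ B i) = 1
  have hBunion : μ (⋃ i, B i) = 1 := by
    have hsub : (⋃ i, B i)ᶜ ⊆ ⋃ i, ⋃ j, ⋃ (_ : i ≠ j), {ω | T i ω = T j ω} := by
      intro ω hω
      simp only [Set.mem_compl_iff, Set.mem_iUnion, Set.mem_setOf_eq, not_exists, not_lt,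
        hBdef] at hω ⊢
      obtain ⟨i, hi⟩ := Finite.exists_max fun k => T k ω
      obtain ⟨j, hj⟩ := Finite.exists_max fun j : {j : Fin n // j ≠ i} => T j.1 ω
      have hSi : S i ω = T j.1 ω :=
        le_antisymm (ciSup_le hj) (hTleS ω i j.1 j.2)
      refine ⟨i, j.1, Ne.symm j.2, ?_⟩
      have h1 : T i ω ≤ T j.1 ω := by
        have := hω i
        rw [← hSi]; exact this
      exact le_antisymm h1 (hi j.1)
    have hnull : μ ((⋃ i, B i)ᶜ) = 0 := by
      refine measure_mono_null hsub ?_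
      refine measure_iUnion_null fun i => measure_iUnion_null fun j => ?_
      by_cases hij : i = j
      · simp [hij]
      · have := aux_tie μ (T i) (T j) (hmeas i) (hmeas j) (hindep.indepFun hij)
          (aux_no_atom μ eps (T j) (hmeas j) (hexp j))
        refine measure_mono_null (fun ω h => ?_) this
        simp only [Set.mem_iUnion, Set.mem_setOf_eq] at h ⊢
        exact h.2
    have hc := measure_compl (MeasurableSet.iUnion hBmeas) (measure_ne_top μ _)
    rw [hnull, measure_univ] at hc
    have h1le : (1:ℝ≥0∞) ≤ μ (⋃ i, B i) := tsub_eq_zero_iff_le.mp hc.symm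
    exact le_antisymm prob_le_one h1le
  -- key computation
  have hAi : ∀ i, μ (A i) = ENNReal.ofReal (Real.exp (-eps)) * μ (B i) := by
    intro i
    have := aux_tail_indep μ eps (S i) (T i) (hSmeas i) (hmeas i) (hindSi i) (hSpos i)
      (hexp i) 1 (by norm_num)
    simpa [mul_one] using this
  have hUA : μ (⋃ i, A i) = ENNReal.ofReal (Real.exp (-eps)) := by
    rw [measure_iUnion hdisjA hAmeas]
    simp_rw [hAi]
    rw [ENNReal.tsum_mul_left, ← measure_iUnion hdisjB hBmeas, hBunion, mul_one]
  have htarget : {ω | (⨆ i : Fin n, T i ω) ≤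
      (⨅ i : Fin n, ⨆ j : {j : Fin n // j ≠ i}, T j.1 ω) + 1} = (⋃ i, A i)ᶜ := by
    rw [← hcompl, compl_compl]
  rw [htarget, measure_compl (MeasurableSet.iUnion hAmeas) (measure_ne_top μ _),
    measure_univ, hUA, ENNReal.ofReal_sub 1 (Real.exp_nonneg _), ENNReal.ofReal_one]
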